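/- In a metabelian Lie algebra L over a field of characteristic 0, for any u, v ∈ L with u = ū + u₀ and v = v̄ + v₀ where u₀, v₀ ∈ [L,L], and for any polynomial (or formal series truncated by nilpotence) c in two commuting variables, one has [u,v]·c(ad u, ad v) = ([ū,v̄] + [u₀,v̄] − [v₀,ū])·c(ad ū, ad v̄), where c(ad u, ad v) denotes substitution of the commuting operators ad u, ad v (which commute on the commutator ideal). -/
import Mathlib


/-- The right adjoint action `adr x : u ↦ ⁅u, x⁆`. -/
noncomputable def adr (K : Type*) (L : Type*) [Field K] [LieRing L] [LieAlgebra K L]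
    (x : L) : Module.End K L := -(LieAlgebra.ad K L x)

lemma adr_apply (K : Type*) (L : Type*) [Field K] [LieRing L] [LieAlgebra K L]
    (x w : L) : adr K L x w = ⁅w, x⁆ := by
  simp only [adr, LinearMap.neg_apply, LieAlgebra.ad_apply]
  exact lie_skew w x

/-- In a metabelian Lie algebra, for `u = ū + u₀`, `v = v̄ + v₀` with `u₀, v₀` in the
commutator ideal and any polynomial `c` in two commuting variables (given by its
coefficients `a` on a finite set `s` of exponent pairs),
`[u,v]·c(ad u, ad v) = ([ū,v̄] + [u₀,v̄] − [v₀,ū])·c(ad ū, ad v̄)`. -/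
theorem metabelian_bracket_series_reduction
    (K : Type*) (L : Type*) [Field K] [CharZero K] [LieRing L] [LieAlgebra K L]
    (hmet : ∀ a b c d : L, ⁅⁅a, b⁆, ⁅c, d⁆⁆ = 0)
    (u v ubar u0 vbar v0 : L)
    (hu : u = ubar + u0) (hv : v = vbar + v0)
    (hu0 : u0 ∈ ⁅(⊤ : LieIdeal K L), (⊤ : LieIdeal K L)⁆)
    (hv0 : v0 ∈ ⁅(⊤ : LieIdeal K L), (⊤ : LieIdeal K L)⁆)
    (s : Finset (ℕ × ℕ)) (a : ℕ × ℕ → K) :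
    ∑ p ∈ s, a p • ((adr K L v) ^ p.2) (((adr K L u) ^ p.1) ⁅u, v⁆) =
      ∑ p ∈ s, a p • ((adr K L vbar) ^ p.2)
        (((adr K L ubar) ^ p.1) (⁅ubar, vbar⁆ + ⁅u0, vbar⁆ - ⁅v0, ubar⁆)) := by
  set D := ⁅(⊤ : LieIdeal K L), (⊤ : LieIdeal K L)⁆ with hDdef
  -- membership in D as a linear span
  have hspan : (D : Submodule K L) =
      Submodule.span K { m : L | ∃ x ∈ (⊤ : LieIdeal K L), ∃ n ∈ (⊤ : LieIdeal K L), ⁅x, n⁆ = m } :=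
    LieSubmodule.lieIdeal_oper_eq_linear_span' _ _
  -- brackets of two elements of D vanish
  have key : ∀ w ∈ D, ∀ z ∈ D, ⁅w, z⁆ = (0 : L) := by
    have step : ∀ a b : L, ∀ z ∈ D, ⁅⁅a, b⁆, z⁆ = (0 : L) := by
      intro x y z hz
      have hz' : z ∈ (D : Submodule K L) := hz
      rw [hspan] at hz'
      clear hz
      induction hz' using Submodule.span_induction with
      | mem m hm => obtain ⟨c, -, d, -, rfl⟩ := hm; exact hmet x y c d
      | zero => simp
      | add m n _ _ hm hn => rw [lie_add, hm, hn, add_zero]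
      | smul t m _ hm => rw [lie_smul, hm, smul_zero]
    intro w hw z hz
    have hw' : w ∈ (D : Submodule K L) := hw
    rw [hspan] at hw'
    clear hw
    induction hw' using Submodule.span_induction with
    | mem m hm => obtain ⟨c, -, d, -, rfl⟩ := hm; exact step c d z hz
    | zero => simp
    | add m n _ _ hm hn => rw [add_lie, hm, hn, add_zero]
    | smul t m _ hm => rw [smul_lie, hm, smul_zero]
  -- a power lemma
  have pow_lem : ∀ (x x0 : L), x0 ∈ D → ∀ n : ℕ, ∀ w ∈ D,
      ((adr K L (x + x0)) ^ n) w = ((adr K L x) ^ n) w ∧ ((adr K L x) ^ n) w ∈ D := by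
    intro x x0 hx0 n
    induction n with
    | zero => intro w hw; exact ⟨rfl, hw⟩
    | succ n ih =>
      intro w hw
      have h1 : adr K L (x + x0) w = adr K L x w := by
        rw [adr_apply, adr_apply, lie_add, key w hw x0 hx0, add_zero]
      have h2 : adr K L x w ∈ D := by
        rw [adr_apply, ← lie_skew w x]
        exact neg_mem (D.lie_mem hw)
      obtain ⟨ih1, ih2⟩ := ih (adr K L x w) h2
      constructor
      · rw [pow_succ, pow_succ, Module.End.mul_apply, Module.End.mul_apply, h1, ih1]
      · rw [pow_succ, Module.End.mul_apply]; exact ih2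
  -- the bracket identity
  have hbr : ⁅u, v⁆ = ⁅ubar, vbar⁆ + ⁅u0, vbar⁆ - ⁅v0, ubar⁆ := by
    rw [hu, hv, add_lie, lie_add, lie_add, key u0 hu0 v0 hv0, ← lie_skew ubar v0]
    abel
  set X := ⁅ubar, vbar⁆ + ⁅u0, vbar⁆ - ⁅v0, ubar⁆ with hXdef
  have hXD : X ∈ D := by
    have h1 : ⁅ubar, vbar⁆ ∈ D :=
      LieSubmodule.lie_mem_lie (LieSubmodule.mem_top _) (LieSubmodule.mem_top _)
    have h2 : ⁅u0, vbar⁆ ∈ D :=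
      LieSubmodule.lie_mem_lie (LieSubmodule.mem_top _) (LieSubmodule.mem_top _)
    have h3 : ⁅v0, ubar⁆ ∈ D :=
      LieSubmodule.lie_mem_lie (LieSubmodule.mem_top _) (LieSubmodule.mem_top _)
    exact sub_mem (add_mem h1 h2) h3
  refine Finset.sum_congr rfl fun p _ => ?_
  obtain ⟨h1, h2⟩ := pow_lem ubar u0 hu0 p.1 X hXD
  obtain ⟨h3, h4⟩ := pow_lem vbar v0 hv0 p.2 (((adr K L ubar) ^ p.1) X) h2
  rw [hbr, hu, hv, h1, h3]
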